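/- Let λ₀ be the smallest eigenvalue of -L_ref on {1,...,D_G} with Dirichlet condition at 0, where L_ref has death rate a and birth rate b with a < b. Then λ₀ ≤ (b-a)/((b/a)^{D_G} - 1). -/

import Mathlib

open scoped RealInnerProductSpace

private lemma aux_shift_sum {D : ℕ} (v : Fin D → ℝ) (m : ℕ) (C : ℝ) :
    (∑ j : Fin D, if m = (j : ℕ) then C * v j else 0)
      = C * (if h : m < D then v ⟨m, h⟩ else 0) := by
  split_ifs with h
  · rw [Finset.sum_eq_single (⟨m, h⟩ : Fin D)]
    · simp
    · intro j _ hj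
      rw [if_neg]
      exact fun e => hj (Fin.ext e.symm)
    · simp
  · rw [Finset.sum_eq_zero, mul_zero]
    intro j _
    rw [if_neg]
    intro e
    exact h (by rw [e]; exact j.isLt)

/-- Let `λ₀` be the smallest eigenvalue of `-L_ref` on `{1,…,D_G}` with Dirichlet
condition at `0`, where `L_ref` has constant death rate `a` and birth rate `b`
with `a < b` (birth rate `0` at `D_G`). Then `λ₀ ≤ (b-a)/((b/a)^{D_G} - 1)`. -/
theorem stmt17 (a b : ℝ) (ha : 0 < a) (hab : a < b) (D : ℕ) (hD : 1 ≤ D) (lam0 : ℝ)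
    (hleast : IsLeast {μ : ℝ | ∃ g : ℕ → ℝ, g 0 = 0 ∧ (∃ k, 1 ≤ k ∧ k ≤ D ∧ g k ≠ 0) ∧
      ∀ k : ℕ, 1 ≤ k → k ≤ D →
        a * (g (k - 1) - g k) + (if k < D then b else 0) * (g (k + 1) - g k) =
          -μ * g k} lam0) :
    lam0 ≤ (b - a) / ((b / a) ^ D - 1) := by
  classical
  obtain ⟨hmem, hlb⟩ := hleast
  have hb : 0 < b := ha.trans hab
  have hq1 : 1 < b / a := (one_lt_div ha).2 hab
  have hq0 : 0 < b / a := lt_trans one_pos hq1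
  set s : ℝ := Real.sqrt (b / a) with hs_def
  have hs0 : 0 < s := Real.sqrt_pos.2 hq0
  have hss : s * s = b / a := Real.mul_self_sqrt hq0.le
  set c : ℝ := Real.sqrt (a * b) with hc_def
  have hcs : a * s = c := by
    rw [hc_def, hs_def, ← Real.sqrt_mul_self ha.le, ← Real.sqrt_mul (mul_nonneg ha.le ha.le)]
    congr 1
    field_simp
    rw [Real.sq_sqrt (sq_nonneg a)]
  have hcb : c * s = b := by
    rw [hc_def, hs_def, ← Real.sqrt_mul (mul_nonneg ha.le hb.le),
      show a * b * (b / a) = b * b by field_simp, Real.sqrt_mul_self hb.le]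
  have har : a = c * s⁻¹ := by
    field_simp [hs0.ne'] at hcs ⊢
    linarith [hcs]
  -- the symmetrized matrix
  set B : Matrix (Fin D) (Fin D) ℝ := Matrix.of fun i j =>
    (if i = j then a + (if (i : ℕ) + 1 < D then b else 0) else 0)
    + (if (i : ℕ) + 1 = (j : ℕ) then -c else 0)
    + (if (j : ℕ) + 1 = (i : ℕ) then -c else 0) with hB_def
  have hBherm : B.IsHermitian := by
    show B.conjTranspose = B
    ext i j
    simp only [Matrix.conjTranspose_apply, hB_def, Matrix.of_apply, star_trivial]
    by_cases hij : i = j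
    · subst hij; rfl
    · rw [if_neg (Ne.symm hij), if_neg hij]; ring
  -- extension of vectors to ℕ
  set ext : (Fin D → ℝ) → ℕ → ℝ := fun u n => if h : n < D then u ⟨n, h⟩ else 0 with hext_def
  -- computation of mulVec
  have hmul : ∀ (u : Fin D → ℝ) (i : Fin D),
      B.mulVec u i
        = (a + (if (i : ℕ) + 1 < D then b else 0)) * u i
          + (-c) * ext u ((i : ℕ) + 1)
          + (if (i : ℕ) = 0 then 0 else (-c) * ext u ((i : ℕ) - 1)) := by
    intro u i
    simp only [Matrix.mulVec, dotProduct, hB_def, Matrix.of_apply, add_mul, ite_mul,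
      zero_mul, Finset.sum_add_distrib]
    congr 1
    congr 1
    · rw [Finset.sum_ite_eq]
      simp
    · rw [aux_shift_sum]
    · by_cases hi : (i : ℕ) = 0
      · rw [if_pos hi, Finset.sum_eq_zero]
        intro j _
        rw [if_neg]
        omega
      · rw [if_neg hi]
        have : ∀ j : Fin D, (if (j : ℕ) + 1 = (i : ℕ) then (-c) * u j else 0)
            = (if (i : ℕ) - 1 = (j : ℕ) then (-c) * u j else 0) := by
          intro j
          refine if_congr ?_ rfl rfl
          omega
        rw [Finset.sum_congr rfl (fun j _ => this j), aux_shift_sum]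
  set T := Matrix.toEuclideanLin B with hT_def
  have hTsymm : T.IsSymmetric := Matrix.isHermitian_iff_isSymmetric.mp hBherm
  haveI : Nonempty (Fin D) := ⟨⟨0, hD⟩⟩
  haveI : Nontrivial (EuclideanSpace ℝ (Fin D)) := by
    refine ⟨(WithLp.equiv 2 _).symm (fun _ => (0:ℝ)), (WithLp.equiv 2 _).symm (fun _ => 1), ?_⟩
    intro h
    have := congrFun (congrArg (WithLp.equiv 2 _) h) ⟨0, hD⟩
    simpa using this
  have heig := hTsymm.hasEigenvalue_iInf_of_finiteDimensional
  set m : ℝ := ⨅ x : {x : EuclideanSpace ℝ (Fin D) // x ≠ 0},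
      RCLike.re (inner ℝ (T x) (x : EuclideanSpace ℝ (Fin D)) : ℝ) / ‖(x : EuclideanSpace ℝ (Fin D))‖ ^ 2 with hm_def
  obtain ⟨v, hv⟩ := heig.exists_hasEigenvector
  clear_value m
  -- m ≤ the Rayleigh quotient of the test vector
  set x0f : Fin D → ℝ := fun i => s ^ ((i : ℕ) + 1) with hx0f_def
  set x0 : EuclideanSpace ℝ (Fin D) := (WithLp.equiv 2 (Fin D → ℝ)).symm x0f with hx0_def
  have hx0ne : x0 ≠ 0 := by
    intro h
    have := congrFun (congrArg (WithLp.equiv 2 (Fin D → ℝ)) h) ⟨0, hD⟩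
    simp only [hx0_def, Equiv.apply_symm_apply, hx0f_def] at this
    norm_num at this
    exact hs0.ne' this
  have hmulx0 : ∀ i : Fin D, B.mulVec x0f i = if (i : ℕ) = 0 then a * s else 0 := by
    intro i
    rw [hmul]
    have hx0fi : x0f i = s ^ ((i : ℕ) + 1) := rfl
    by_cases hi : (i : ℕ) = 0
    · rw [if_pos hi, if_pos hi, hx0fi, hi]
      by_cases hD2 : 0 + 1 < D
      · have he1 : ext x0f (0 + 1) = s ^ 2 := by
          rw [hext_def]
          simp only []
          rw [dif_pos hD2]
        rw [he1, if_pos hD2]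
        linear_combination (-s) * hcb
      · have he1 : ext x0f (0 + 1) = 0 := by
          rw [hext_def]; simp only []; rw [dif_neg hD2]
        rw [he1, if_neg hD2]
        ring
    · rw [if_neg hi, if_neg hi]
      have hilt : (i : ℕ) - 1 < D := by omega
      have he2 : ext x0f ((i : ℕ) - 1) = s ^ (i : ℕ) := by
        rw [hext_def]; simp only []; rw [dif_pos hilt]
        show s ^ ((i : ℕ) - 1 + 1) = s ^ (i : ℕ)
        congr 1
        omega
      rw [he2, hx0fi]
      have e1 : s ^ ((i : ℕ) + 1) = s ^ (i : ℕ) * s := pow_succ s _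
      by_cases h2 : (i : ℕ) + 1 < D
      · have he3 : ext x0f ((i : ℕ) + 1) = s ^ (i : ℕ) * s * s := by
          rw [hext_def]; simp only []; rw [dif_pos h2]
          show s ^ ((i : ℕ) + 1 + 1) = _
          rw [pow_succ, pow_succ]
        rw [he3, if_pos h2, e1]
        linear_combination (s ^ (i : ℕ)) * hcs + (-(s ^ (i : ℕ) * s)) * hcb
      · have he3 : ext x0f ((i : ℕ) + 1) = 0 := by
          rw [hext_def]; simp only []; rw [dif_neg h2]
        rw [he3, if_neg h2, e1]
        linear_combination (s ^ (i : ℕ)) * hcs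
  have hnum : (⟪T x0, x0⟫ : ℝ) = b := by
    have h1 : T x0 = (WithLp.equiv 2 (Fin D → ℝ)).symm (B.mulVec x0f) := by
      rw [hx0_def, hT_def]
      exact Matrix.toEuclideanLin_apply_piLp_toLp B x0f
    rw [h1, hx0_def]
    simp only [WithLp.equiv_symm_apply]
    rw [EuclideanSpace.inner_toLp_toLp, dotProduct_comm]
    unfold dotProduct
    rw [Finset.sum_eq_single (⟨0, hD⟩ : Fin D)]
    · rw [Pi.star_apply, star_trivial, hmulx0]
      rw [if_pos rfl]
      show a * s * s ^ (0 + 1) = b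
      rw [pow_one]
      rw [mul_assoc, hss]
      field_simp
    · intro j _ hj
      rw [Pi.star_apply, star_trivial, hmulx0, if_neg, zero_mul]
      exact fun e => hj (Fin.ext e)
    · simp
  have hden : ‖x0‖ ^ 2 = ∑ i : Fin D, (b / a) ^ ((i : ℕ) + 1) := by
    rw [← real_inner_self_eq_norm_sq, hx0_def]
    simp only [WithLp.equiv_symm_apply]
    rw [EuclideanSpace.inner_toLp_toLp]
    unfold dotProduct
    refine Finset.sum_congr rfl fun i _ => ?_
    rw [Pi.star_apply, star_trivial, hx0f_def]
    simp only []
    rw [← mul_pow, hss]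
  have hgeom : ∑ i : Fin D, (b / a) ^ ((i : ℕ) + 1)
      = (b / a) * (((b / a) ^ D - 1) / (b / a - 1)) := by
    rw [Fin.sum_univ_eq_sum_range (fun n => (b / a) ^ (n + 1)) D]
    have : ∀ n, (b / a) ^ (n + 1) = (b / a) * (b / a) ^ n := fun n => by
      rw [pow_succ]; ring
    rw [Finset.sum_congr rfl fun n _ => this n, ← Finset.mul_sum, geom_sum_eq hq1.ne' D]
  have hpowD : 1 < (b / a) ^ D := one_lt_pow₀ hq1 (by omega)
  have hray : (⟪T x0, x0⟫ : ℝ) / ‖x0‖ ^ 2 = (b - a) / ((b / a) ^ D - 1) := by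
    have hpowD' : 1 < (b / a) ^ D := hpowD
    rw [hnum, hden, hgeom]
    generalize hX : (b / a) ^ D = X at hpowD' ⊢
    have h1 : X - 1 ≠ 0 := ne_of_gt (by linarith)
    have h2 : b / a - 1 ≠ 0 := ne_of_gt (by linarith)
    have h3 : b - a ≠ 0 := ne_of_gt (by linarith)
    field_simp
  -- bounded below
  set Tc : EuclideanSpace ℝ (Fin D) →L[ℝ] EuclideanSpace ℝ (Fin D) :=
    LinearMap.toContinuousLinearMap T with hTc_def
  have hbdd : BddBelow (Set.range fun x : {x : EuclideanSpace ℝ (Fin D) // x ≠ 0} =>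
      RCLike.re (⟪T x, (x : EuclideanSpace ℝ (Fin D))⟫) / ‖(x : EuclideanSpace ℝ (Fin D))‖ ^ 2) := by
    refine ⟨-‖Tc‖, ?_⟩
    rintro y ⟨x, rfl⟩
    dsimp only
    have hxne : (x : EuclideanSpace ℝ (Fin D)) ≠ 0 := x.2
    have hxpos : 0 < ‖(x : EuclideanSpace ℝ (Fin D))‖ ^ 2 := by
      have := norm_pos_iff.mpr hxne
      positivity
    rw [RCLike.re_to_real, le_div_iff₀ hxpos]
    have h1 : |⟪T x, (x : EuclideanSpace ℝ (Fin D))⟫| ≤ ‖Tc‖ * ‖(x : EuclideanSpace ℝ (Fin D))‖ ^ 2 := by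
      calc |⟪T x, (x : EuclideanSpace ℝ (Fin D))⟫|
          ≤ ‖T x‖ * ‖(x : EuclideanSpace ℝ (Fin D))‖ := abs_real_inner_le_norm _ _
        _ ≤ (‖Tc‖ * ‖(x : EuclideanSpace ℝ (Fin D))‖) * ‖(x : EuclideanSpace ℝ (Fin D))‖ := by
            have := Tc.le_opNorm (x : EuclideanSpace ℝ (Fin D))
            have hTx : ‖T x‖ = ‖Tc (x : EuclideanSpace ℝ (Fin D))‖ := rfl
            rw [hTx]
            exact mul_le_mul_of_nonneg_right this (norm_nonneg _)
        _ = ‖Tc‖ * ‖(x : EuclideanSpace ℝ (Fin D))‖ ^ 2 := by ring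
    have := neg_abs_le (⟪T x, (x : EuclideanSpace ℝ (Fin D))⟫)
    nlinarith [abs_nonneg (⟪T x, (x : EuclideanSpace ℝ (Fin D))⟫)]
  have hmle : m ≤ (b - a) / ((b / a) ^ D - 1) := by
    have h1 := ciInf_le hbdd (⟨x0, hx0ne⟩ :
      {x : EuclideanSpace ℝ (Fin D) // x ≠ 0})
    rw [hm_def]
    refine le_trans h1 ?_
    rw [RCLike.re_to_real]
    exact le_of_eq hray
  -- m is an eigenvalue of the original operator
  set vf : Fin D → ℝ := WithLp.equiv 2 (Fin D → ℝ) v with hvf_def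
  have hv1 : T v = m • v := hv.apply_eq_smul
  have hveq : ∀ i : Fin D, B.mulVec vf i = m * vf i := by
    intro i
    have h2 : B.mulVec vf = WithLp.equiv 2 (Fin D → ℝ) (T v) := rfl
    rw [h2, hv1]
    rfl
  set g : ℕ → ℝ := fun n => if n = 0 then 0 else s⁻¹ ^ n * ext vf (n - 1) with hg_def
  have hinS : m ∈ {μ : ℝ | ∃ g : ℕ → ℝ, g 0 = 0 ∧ (∃ k, 1 ≤ k ∧ k ≤ D ∧ g k ≠ 0) ∧
      ∀ k : ℕ, 1 ≤ k → k ≤ D →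
        a * (g (k - 1) - g k) + (if k < D then b else 0) * (g (k + 1) - g k) =
          -μ * g k} := by
    refine ⟨g, by simp [hg_def], ?_, ?_⟩
    · -- nonzero
      have : ∃ i : Fin D, vf i ≠ 0 := by
        by_contra h
        push_neg at h
        refine hv.right ?_
        apply (WithLp.equiv 2 (Fin D → ℝ)).injective
        funext i
        simpa [hvf_def] using h i
      obtain ⟨i, hi⟩ := this
      refine ⟨(i : ℕ) + 1, by omega, by omega, ?_⟩
      rw [hg_def]
      simp only []
      rw [if_neg (by omega)]
      have : ext vf ((i : ℕ) + 1 - 1) = vf i := by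
        rw [Nat.add_sub_cancel, hext_def]; simp only []
        rw [dif_pos i.isLt]
      rw [this]
      exact mul_ne_zero (pow_ne_zero _ (inv_ne_zero hs0.ne')) hi
    · intro k hk1 hkD
      have hik : k - 1 < D := by omega
      have hcomp : (a + (if (k - 1) + 1 < D then b else 0)) * vf ⟨k - 1, hik⟩
          + (-c) * ext vf ((k - 1) + 1)
          + (if k - 1 = 0 then 0 else (-c) * ext vf ((k - 1) - 1))
          = m * vf ⟨k - 1, hik⟩ :=
        (hmul vf ⟨k - 1, hik⟩).symm.trans (hveq ⟨k - 1, hik⟩)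
      rw [show k - 1 + 1 = k from by omega] at hcomp
      have hwk1 : ext vf (k - 1) = vf ⟨k - 1, hik⟩ := dif_pos hik
      have hbk : (if k < D then b else 0) * s⁻¹ * ext vf k = c * ext vf k := by
        by_cases h : k < D
        · rw [if_pos h]
          have hbr : b * s⁻¹ = c := by
            rw [← hcb]; field_simp
          rw [hbr]
        · have hw : ext vf k = 0 := dif_neg (by omega)
          rw [hw]; ring
      have hgk : g k = s⁻¹ ^ k * ext vf (k - 1) := by
        rw [hg_def]; simp only []; rw [if_neg (by omega)]
      have hgk1 : g (k + 1) = s⁻¹ ^ (k + 1) * ext vf k := by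
        rw [hg_def]; simp only []; rw [if_neg (by omega), Nat.add_sub_cancel]
      by_cases hk1' : k = 1
      · subst hk1'
        rw [if_pos rfl] at hcomp
        have hg0 : g 0 = 0 := by simp [hg_def]
        rw [hg0, hgk, hgk1, hwk1]
        linear_combination (-(s⁻¹)) * hcomp + s⁻¹ * hbk
      · -- k ≥ 2
        have hk2 : 2 ≤ k := by omega
        rw [if_neg (show ¬(k - 1 = 0) by omega)] at hcomp
        have hgkm : g (k - 1) = s⁻¹ ^ (k - 1) * ext vf (k - 1 - 1) := by
          rw [hg_def]; simp only []; rw [if_neg (by omega)]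
        have e1 : s⁻¹ ^ k = s⁻¹ ^ (k - 1) * s⁻¹ := by
          rw [← pow_succ]
          congr 1
          omega
        have e2 : s⁻¹ ^ (k + 1) = s⁻¹ ^ k * s⁻¹ := pow_succ _ _
        rw [hgkm, hgk, hgk1, hwk1, e2, e1]
        linear_combination (-(s⁻¹ ^ (k - 1) * s⁻¹)) * hcomp
          + (s⁻¹ ^ (k - 1) * ext vf (k - 1 - 1)) * har
          + (s⁻¹ ^ (k - 1) * s⁻¹) * hbk
  exact le_trans (hlb hinS) hmle
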